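/- arXiv:1804.05009 — 5 statements merged into one kernel-verified Lean document; each statement's English description precedes it below -/
import Mathlib

section
/- For every convex body K in ℝ^n, there exists an invertible linear map A ∈ GL_n(ℝ) such that the isodiametric quotient of AK equals the supremum of the isodiametric quotients of BK over all B ∈ GL_n(ℝ); i.e., the supremum of iq(BK) over invertible linear maps B is attained. -/
open MeasureTheory Metric Set Pointwise
open scoped RealInnerProductSpace

/-- A convex body: a compact convex set with nonempty interior. -/
def IsConvexBody {n : ℕ} (K : Set (EuclideanSpace ℝ (Fin n))) : Prop :=
  IsCompact K ∧ Convex ℝ K ∧ (interior K).Nonempty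

/-- The isodiametric quotient `iq(K) = vol(K) / D(K)^n`. -/
noncomputable def iq {n : ℕ} (K : Set (EuclideanSpace ℝ (Fin n))) : ℝ :=
  (volume K).toReal / Metric.diam K ^ n

/-- `K` is in Behrend position if `iq(K)` is maximal among invertible linear images of `K`. -/
def InBehrendPosition {n : ℕ} (K : Set (EuclideanSpace ℝ (Fin n))) : Prop :=
  ∀ A : EuclideanSpace ℝ (Fin n) ≃ₗ[ℝ] EuclideanSpace ℝ (Fin n), iq (A '' K) ≤ iq K

section BehrendAux

variable {n : ℕ}

/-- Auxiliary functional: `|det B| · vol K / diam (B '' K) ^ n`, defined for all continuous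
linear endomorphisms `B`. -/
noncomputable def behrendG (K : Set (EuclideanSpace ℝ (Fin n)))
    (B : EuclideanSpace ℝ (Fin n) →L[ℝ] EuclideanSpace ℝ (Fin n)) : ℝ :=
  |ContinuousLinearMap.det B| * (volume K).toReal / Metric.diam (⇑B '' K) ^ n

lemma behrendG_eq_iq (K : Set (EuclideanSpace ℝ (Fin n)))
    (B : EuclideanSpace ℝ (Fin n) ≃ₗ[ℝ] EuclideanSpace ℝ (Fin n))
    (C : EuclideanSpace ℝ (Fin n) →L[ℝ] EuclideanSpace ℝ (Fin n))
    (h : ∀ x, C x = B x) : iq (⇑B '' K) = behrendG K C := by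
  have hfun : ⇑C = ⇑B := funext h
  have hdet : ContinuousLinearMap.det C
      = LinearMap.det (B : EuclideanSpace ℝ (Fin n) →ₗ[ℝ] EuclideanSpace ℝ (Fin n)) := by
    show LinearMap.det (C : EuclideanSpace ℝ (Fin n) →ₗ[ℝ] EuclideanSpace ℝ (Fin n)) = _
    congr 1
    exact LinearMap.ext fun x => h x
  have hvol : volume (⇑B '' K)
      = ENNReal.ofReal
          |LinearMap.det (B : EuclideanSpace ℝ (Fin n) →ₗ[ℝ] EuclideanSpace ℝ (Fin n))|
        * volume K := by
    rw [← LinearEquiv.coe_coe]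
    exact Measure.addHaar_image_linearMap volume _ K
  rw [iq, behrendG, hfun, hdet, hvol, ENNReal.toReal_mul, ENNReal.toReal_ofReal (abs_nonneg _)]

lemma behrendG_smul (K : Set (EuclideanSpace ℝ (Fin n))) {c : ℝ} (hc : 0 < c)
    (B : EuclideanSpace ℝ (Fin n) →L[ℝ] EuclideanSpace ℝ (Fin n)) :
    behrendG K (c • B) = behrendG K B := by
  have hdet : ContinuousLinearMap.det (c • B) = c ^ n * ContinuousLinearMap.det B := by
    show LinearMap.det _ = _
    rw [ContinuousLinearMap.coe_smul, LinearMap.det_smul, finrank_euclideanSpace_fin]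
  have himg : ⇑(c • B) '' K = c • (⇑B '' K) := by
    rw [show c • (⇑B '' K) = (fun x => c • x) '' (⇑B '' K) from rfl, ← Set.image_comp]
    rfl
  have hc' : c ^ n ≠ 0 := pow_ne_zero n hc.ne'
  simp only [behrendG, hdet, himg, diam_smul₀, Real.norm_eq_abs, abs_of_pos hc, abs_mul,
    abs_pow, mul_pow]
  rw [mul_assoc, mul_div_mul_left _ _ hc']

lemma continuous_diam_image {K : Set (EuclideanSpace ℝ (Fin n))} (hKc : IsCompact K)
    (hne : K.Nonempty) :
    Continuous fun B : EuclideanSpace ℝ (Fin n) →L[ℝ] EuclideanSpace ℝ (Fin n) =>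
      Metric.diam (⇑B '' K) := by
  obtain ⟨R, hR⟩ := hKc.isBounded.subset_closedBall 0
  obtain ⟨x0, hx0⟩ := hne
  have hR0 : 0 ≤ R := le_trans dist_nonneg (hR hx0)
  have key : ∀ B C : EuclideanSpace ℝ (Fin n) →L[ℝ] EuclideanSpace ℝ (Fin n),
      Metric.diam (⇑B '' K) ≤ Metric.diam (⇑C '' K) + 2 * R * dist B C := by
    intro B C
    have hCb : Bornology.IsBounded (⇑C '' K) := (hKc.image C.continuous).isBounded
    refine diam_le_of_forall_dist_le
      (add_nonneg diam_nonneg (by positivity)) ?_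
    rintro p ⟨x, hx, rfl⟩ q ⟨y, hy, rfl⟩
    have hbound : ∀ z ∈ K, dist (B z) (C z) ≤ dist B C * R := by
      intro z hz
      rw [dist_eq_norm, ← ContinuousLinearMap.sub_apply, dist_eq_norm]
      calc ‖(B - C) z‖ ≤ ‖B - C‖ * ‖z‖ := (B - C).le_opNorm z
        _ ≤ ‖B - C‖ * R := by
            gcongr
            exact mem_closedBall_zero_iff.mp (hR hz)
    have h1 := hbound x hx
    have h2 := hbound y hy
    have h3 : dist (C x) (C y) ≤ Metric.diam (⇑C '' K) :=
      dist_le_diam_of_mem hCb ⟨x, hx, rfl⟩ ⟨y, hy, rfl⟩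
    have h4 : dist (B x) (B y) ≤ dist (B x) (C x) + dist (C x) (C y) + dist (C y) (B y) :=
      dist_triangle4 _ _ _ _
    have h5 : dist (C y) (B y) = dist (B y) (C y) := dist_comm _ _
    linarith
  have hlip : LipschitzWith (Real.toNNReal (2 * R))
      (fun B : EuclideanSpace ℝ (Fin n) →L[ℝ] EuclideanSpace ℝ (Fin n) =>
        Metric.diam (⇑B '' K)) := by
    apply LipschitzWith.of_dist_le_mul
    intro B C
    have h2R : ((Real.toNNReal (2 * R)) : ℝ) = 2 * R := Real.coe_toNNReal _ (by positivity)
    rw [Real.dist_eq, h2R, abs_sub_le_iff]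
    have hdc : dist C B = dist B C := dist_comm _ _
    have k1 := key B C
    have k2 := key C B
    rw [hdc] at k2
    exact ⟨by linarith, by linarith⟩
  exact hlip.continuous

lemma diam_image_lb {K : Set (EuclideanSpace ℝ (Fin n))} (hKc : IsCompact K)
    {x0 : EuclideanSpace ℝ (Fin n)} {ρ : ℝ} (hρ : 0 < ρ) (hball : ball x0 ρ ⊆ K)
    {B : EuclideanSpace ℝ (Fin n) →L[ℝ] EuclideanSpace ℝ (Fin n)}
    (hB : (1 : ℝ) / 2 < ‖B‖) : ρ / 2 ≤ Metric.diam (⇑B '' K) := by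
  obtain ⟨v, hv1, hv2⟩ := B.exists_lt_apply_of_lt_opNorm hB
  set t : ℝ := ρ / 2 with ht
  have htpos : 0 < t := by positivity
  have htρ : t < ρ := by rw [ht]; linarith
  have hvmem : ∀ s : ℝ, |s| ≤ t → x0 + s • v ∈ K := by
    intro s hs
    apply hball
    rw [mem_ball, dist_self_add_left, norm_smul, Real.norm_eq_abs]
    calc |s| * ‖v‖ ≤ t * ‖v‖ := by gcongr
      _ ≤ t * 1 := by gcongr
      _ < ρ := by linarith
  have hmem1 : x0 + t • v ∈ K := hvmem t (le_of_eq (abs_of_pos htpos))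
  have hmem2 : x0 + (-t) • v ∈ K := hvmem (-t) (by rw [abs_neg, abs_of_pos htpos])
  have hdist : t ≤ dist (B (x0 + t • v)) (B (x0 + (-t) • v)) := by
    rw [dist_eq_norm, ← map_sub]
    have heq : (x0 + t • v) - (x0 + (-t) • v) = (2 * t) • v := by
      rw [add_sub_add_left_eq_sub, ← sub_smul]
      ring_nf
    rw [heq, B.map_smul, norm_smul, Real.norm_eq_abs, abs_of_pos (by linarith : (0:ℝ) < 2 * t)]
    nlinarith [norm_nonneg (B v)]
  refine le_trans hdist (dist_le_diam_of_mem (hKc.image B.continuous).isBounded ?_ ?_)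
  · exact ⟨_, hmem1, rfl⟩
  · exact ⟨_, hmem2, rfl⟩

end BehrendAux

/-- For every convex body `K` in `ℝⁿ`, the supremum of the isodiametric quotients of
invertible linear images of `K` is attained. -/
theorem behrend_position_attained {n : ℕ} (K : Set (EuclideanSpace ℝ (Fin n)))
    (hK : IsConvexBody K) :
    ∃ A : EuclideanSpace ℝ (Fin n) ≃ₗ[ℝ] EuclideanSpace ℝ (Fin n),
      (iq (A '' K) =
        ⨆ B : EuclideanSpace ℝ (Fin n) ≃ₗ[ℝ] EuclideanSpace ℝ (Fin n), iq (B '' K)) ∧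
      (∀ B : EuclideanSpace ℝ (Fin n) ≃ₗ[ℝ] EuclideanSpace ℝ (Fin n),
        iq (B '' K) ≤ iq (A '' K)) := by
  obtain ⟨hKc, _hKconv, hKint⟩ := hK
  haveI : Nonempty (EuclideanSpace ℝ (Fin n) ≃ₗ[ℝ] EuclideanSpace ℝ (Fin n)) :=
    ⟨LinearEquiv.refl ℝ _⟩
  rcases subsingleton_or_nontrivial (EuclideanSpace ℝ (Fin n)) with hsub | hnt
  · -- degenerate case: the space is a single point, every linear image of `K` is `K`.
    have himg : ∀ B : EuclideanSpace ℝ (Fin n) ≃ₗ[ℝ] EuclideanSpace ℝ (Fin n),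
        ⇑B '' K = K := by
      intro B
      have : ⇑B = id := funext fun x => Subsingleton.elim _ _
      rw [this, image_id]
    have hconst : (fun B : EuclideanSpace ℝ (Fin n) ≃ₗ[ℝ] EuclideanSpace ℝ (Fin n) =>
        iq (⇑B '' K)) = fun _ => iq K := funext fun B => by rw [himg B]
    refine ⟨LinearEquiv.refl ℝ _, ?_, ?_⟩
    · rw [show (⨆ B : EuclideanSpace ℝ (Fin n) ≃ₗ[ℝ] EuclideanSpace ℝ (Fin n),
          iq (⇑B '' K)) = iq K from by rw [hconst]; exact ciSup_const, himg]
    · intro B; rw [himg B, himg]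
  · obtain ⟨x0, hx0⟩ := hKint
    obtain ⟨ρ, hρpos, hballint⟩ := Metric.isOpen_iff.mp isOpen_interior x0 hx0
    have hball : ball x0 ρ ⊆ K := hballint.trans interior_subset
    have hKne : K.Nonempty := ⟨x0, interior_subset hx0⟩
    -- the unit sphere of operators
    have hid : ContinuousLinearMap.id ℝ (EuclideanSpace ℝ (Fin n))
        ∈ sphere (0 : EuclideanSpace ℝ (Fin n) →L[ℝ] EuclideanSpace ℝ (Fin n)) 1 := by
      rw [mem_sphere_zero_iff_norm]
      exact ContinuousLinearMap.norm_id
    have hcontOn : ContinuousOn (behrendG K)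
        (sphere (0 : EuclideanSpace ℝ (Fin n) →L[ℝ] EuclideanSpace ℝ (Fin n)) 1) := by
      intro B hB
      have hBnorm : ‖B‖ = 1 := mem_sphere_zero_iff_norm.mp hB
      have hBhalf : (1 : ℝ) / 2 < ‖B‖ := by rw [hBnorm]; norm_num
      have hdpos : 0 < Metric.diam (⇑B '' K) :=
        lt_of_lt_of_le (by positivity) (diam_image_lb hKc hρpos hball hBhalf)
      have hnum : Continuous fun C : EuclideanSpace ℝ (Fin n) →L[ℝ] EuclideanSpace ℝ (Fin n) =>
          |ContinuousLinearMap.det C| * (volume K).toReal :=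
        ContinuousLinearMap.continuous_det.abs.mul continuous_const
      have hden := (continuous_diam_image hKc hKne).pow n
      exact ContinuousAt.continuousWithinAt
        (ContinuousAt.div hnum.continuousAt hden.continuousAt (pow_ne_zero n hdpos.ne'))
    obtain ⟨A₀, hA₀mem, hA₀max⟩ :=
      (isCompact_sphere (0 : EuclideanSpace ℝ (Fin n) →L[ℝ] EuclideanSpace ℝ (Fin n)) 1
        ).exists_isMaxOn ⟨_, hid⟩ hcontOn
    -- `behrendG K A₀` bounds all invertible images
    have hub : ∀ B : EuclideanSpace ℝ (Fin n) ≃ₗ[ℝ] EuclideanSpace ℝ (Fin n),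
        iq (⇑B '' K) ≤ behrendG K A₀ := by
      intro B
      set C := LinearMap.toContinuousLinearMap
        (B : EuclideanSpace ℝ (Fin n) →ₗ[ℝ] EuclideanSpace ℝ (Fin n)) with hC
      have hCapp : ∀ x, C x = B x := fun x => by simp [hC]
      have hCnorm : ‖C‖ ≠ 0 := by
        intro h0
        obtain ⟨x, hx⟩ := exists_ne (0 : EuclideanSpace ℝ (Fin n))
        have hC0 : C = 0 := norm_eq_zero.mp h0
        have hBx : B x = 0 := by rw [← hCapp x, hC0]; rfl
        exact hx (by simpa using B.map_eq_zero_iff.mp hBx)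
      have hCpos : 0 < ‖C‖ := lt_of_le_of_ne (norm_nonneg C) (Ne.symm hCnorm)
      have hmem : ‖C‖⁻¹ • C
          ∈ sphere (0 : EuclideanSpace ℝ (Fin n) →L[ℝ] EuclideanSpace ℝ (Fin n)) 1 := by
        rw [mem_sphere_zero_iff_norm, norm_smul (‖C‖⁻¹) C, norm_inv, norm_norm,
          inv_mul_cancel₀ hCnorm]
      calc iq (⇑B '' K) = behrendG K C := behrendG_eq_iq K B C hCapp
        _ = behrendG K (‖C‖⁻¹ • C) := (behrendG_smul K (inv_pos.mpr hCpos) C).symm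
        _ ≤ behrendG K A₀ := hA₀max hmem
    -- positivity of `iq K` and invertibility of the maximizer
    have hiqK_eq : iq K = behrendG K (ContinuousLinearMap.id ℝ (EuclideanSpace ℝ (Fin n))) := by
      have := behrendG_eq_iq K (LinearEquiv.refl ℝ (EuclideanSpace ℝ (Fin n)))
        (ContinuousLinearMap.id ℝ (EuclideanSpace ℝ (Fin n))) (fun _ => rfl)
      rwa [show ⇑(LinearEquiv.refl ℝ (EuclideanSpace ℝ (Fin n))) '' K = K from Set.image_id K] at this
    have hiqK : 0 < iq K := by
      have hvol : 0 < (volume K).toReal := by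
        refine ENNReal.toReal_pos ?_ hKc.measure_lt_top.ne
        exact ne_of_gt (lt_of_lt_of_le (measure_ball_pos volume x0 hρpos) (measure_mono hball))
      have hidhalf : (1 : ℝ) / 2
          < ‖ContinuousLinearMap.id ℝ (EuclideanSpace ℝ (Fin n))‖ := by
        rw [ContinuousLinearMap.norm_id]; norm_num
      have hd : 0 < Metric.diam K := by
        have h := diam_image_lb hKc hρpos hball hidhalf
        have h' : ρ / 2 ≤ Metric.diam K := by simpa using h
        linarith
      exact div_pos hvol (pow_pos hd n)
    have hA₀pos : 0 < behrendG K A₀ := by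
      have h2 : behrendG K (ContinuousLinearMap.id ℝ (EuclideanSpace ℝ (Fin n)))
          ≤ behrendG K A₀ := hA₀max hid
      rw [← hiqK_eq] at h2
      linarith
    have hdet : LinearMap.det
        (A₀ : EuclideanSpace ℝ (Fin n) →ₗ[ℝ] EuclideanSpace ℝ (Fin n)) ≠ 0 := by
      intro h
      rw [behrendG, show ContinuousLinearMap.det A₀
        = LinearMap.det (A₀ : EuclideanSpace ℝ (Fin n) →ₗ[ℝ] EuclideanSpace ℝ (Fin n))
        from rfl, h] at hA₀pos
      simp at hA₀pos
    set A := LinearMap.equivOfDetNeZero _ hdet with hA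
    have hiqA : iq (⇑A '' K) = behrendG K A₀ :=
      behrendG_eq_iq K A A₀ (fun x => (LinearEquiv.ofIsUnitDet_apply _ _).symm)
    have hmax : ∀ B : EuclideanSpace ℝ (Fin n) ≃ₗ[ℝ] EuclideanSpace ℝ (Fin n),
        iq (⇑B '' K) ≤ iq (⇑A '' K) := fun B => by rw [hiqA]; exact hub B
    refine ⟨A, ?_, hmax⟩
    have hbdd : BddAbove (Set.range fun B : EuclideanSpace ℝ (Fin n) ≃ₗ[ℝ]
        EuclideanSpace ℝ (Fin n) => iq (⇑B '' K)) := by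
      refine ⟨iq (⇑A '' K), ?_⟩
      rintro x ⟨B, rfl⟩
      exact hmax B
    exact le_antisymm (le_ciSup hbdd A) (ciSup_le hmax)
end

section
/- Let K be an o-symmetric convex body in ℝ^n with diameter D(K) = 2. Then K is in Behrend position if and only if K is in Löwner position. -/
open MeasureTheory Metric Set Pointwise
open scoped RealInnerProductSpace

/-- `K` is in Löwner position if `K ⊆ B₂ⁿ` and every ellipsoid (affine image of the unit
ball) containing `K` has volume at least that of the unit ball. -/
def InLownerPosition {n : ℕ} (K : Set (EuclideanSpace ℝ (Fin n))) : Prop :=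
  K ⊆ closedBall 0 1 ∧
  ∀ (A : EuclideanSpace ℝ (Fin n) ≃ₗ[ℝ] EuclideanSpace ℝ (Fin n)) (t : EuclideanSpace ℝ (Fin n)),
    K ⊆ (fun x => A x + t) '' closedBall 0 1 →
    volume (closedBall (0 : EuclideanSpace ℝ (Fin n)) 1) ≤
      volume ((fun x => A x + t) '' closedBall 0 1)

/-- Volume of the image of a set under a linear equivalence. -/
lemma aux_vol_image {n : ℕ} (A : EuclideanSpace ℝ (Fin n) ≃ₗ[ℝ] EuclideanSpace ℝ (Fin n))
    (s : Set (EuclideanSpace ℝ (Fin n))) :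
    volume (⇑A '' s) = ENNReal.ofReal
      |LinearMap.det (A : EuclideanSpace ℝ (Fin n) →ₗ[ℝ] EuclideanSpace ℝ (Fin n))| * volume s := by
  rw [← Measure.addHaar_image_linearMap volume A.toLinearMap s]
  rfl

/-- Volume is invariant under translations. -/
lemma aux_translate {n : ℕ} (t : EuclideanSpace ℝ (Fin n)) (s : Set (EuclideanSpace ℝ (Fin n))) :
    volume ((fun y => y + t) '' s) = volume s := by
  have h : (fun y : EuclideanSpace ℝ (Fin n) => y + t) '' s = t +ᵥ s := by
    ext x
    simp only [Set.mem_image, Set.mem_vadd_set, vadd_eq_add]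
    constructor
    · rintro ⟨y, hy, rfl⟩; exact ⟨y, hy, by rw [add_comm]⟩
    · rintro ⟨y, hy, rfl⟩; exact ⟨y, hy, by rw [add_comm]⟩
  rw [h, measure_vadd]

/-- The determinants of a linear equivalence and its inverse multiply to one. -/
lemma aux_det_mul {n : ℕ} (A : EuclideanSpace ℝ (Fin n) ≃ₗ[ℝ] EuclideanSpace ℝ (Fin n)) :
    LinearMap.det (A.symm : EuclideanSpace ℝ (Fin n) →ₗ[ℝ] EuclideanSpace ℝ (Fin n)) *
      LinearMap.det (A : EuclideanSpace ℝ (Fin n) →ₗ[ℝ] EuclideanSpace ℝ (Fin n)) = 1 := by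
  rw [← LinearMap.det_comp]
  have h : (A.symm.toLinearMap).comp A.toLinearMap = LinearMap.id := by
    ext x; simp
  rw [h, LinearMap.det_id]

/-- Determinant of scalar multiplication. -/
lemma aux_det_smul {n : ℕ} (c : ℝ) (hc : c ≠ 0) :
    LinearMap.det ((LinearEquiv.smulOfNeZero ℝ (EuclideanSpace ℝ (Fin n)) c hc :
      EuclideanSpace ℝ (Fin n) →ₗ[ℝ] EuclideanSpace ℝ (Fin n))) = c ^ n := by
  have h : ((LinearEquiv.smulOfNeZero ℝ (EuclideanSpace ℝ (Fin n)) c hc :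
      EuclideanSpace ℝ (Fin n) →ₗ[ℝ] EuclideanSpace ℝ (Fin n))) = c • LinearMap.id :=
    LinearMap.ext fun x => rfl
  rw [h, LinearMap.det_smul, LinearMap.det_id, mul_one, finrank_euclideanSpace_fin]

/-- A bounded symmetric set is contained in the ball of radius half its diameter. -/
lemma aux_symm_subset {n : ℕ} {S : Set (EuclideanSpace ℝ (Fin n))}
    (hb : Bornology.IsBounded S) (hs : S = -S) :
    S ⊆ closedBall 0 (Metric.diam S / 2) := by
  intro x hx
  have hnx : -x ∈ S := by rw [hs]; exact Set.neg_mem_neg.mpr hx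
  have hd := Metric.dist_le_diam_of_mem hb hx hnx
  have h2 : x - -x = (2 : ℝ) • x := by rw [sub_neg_eq_add, two_smul]
  have hdist : dist x (-x) = 2 * ‖x‖ := by
    rw [dist_eq_norm, h2, norm_smul]; norm_num
  rw [mem_closedBall_zero_iff]
  linarith

/-- If a symmetric set is contained in a translated ellipsoid, it is contained in the
centered ellipsoid. -/
lemma aux_center {n : ℕ} (A : EuclideanSpace ℝ (Fin n) ≃ₗ[ℝ] EuclideanSpace ℝ (Fin n))
    (t : EuclideanSpace ℝ (Fin n)) {S : Set (EuclideanSpace ℝ (Fin n))} (hs : S = -S)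
    (h : S ⊆ (fun x => A x + t) '' closedBall 0 1) : S ⊆ ⇑A '' closedBall 0 1 := by
  intro x hx
  have hnx : -x ∈ S := by rw [hs]; exact Set.neg_mem_neg.mpr hx
  obtain ⟨b₁, hb₁, e₁⟩ := h hx
  obtain ⟨b₂, hb₂, e₂⟩ := h hnx
  rw [mem_closedBall_zero_iff] at hb₁ hb₂
  refine ⟨(2⁻¹ : ℝ) • (b₁ - b₂), ?_, ?_⟩
  · rw [mem_closedBall_zero_iff, norm_smul]
    have := norm_sub_le b₁ b₂
    rw [Real.norm_eq_abs]
    rw [abs_of_pos (by norm_num : (0:ℝ) < 2⁻¹)]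
    nlinarith [norm_nonneg (b₁ - b₂)]
  · have hthis : A b₁ - A b₂ = (2 : ℝ) • x := by
      have h1 : A b₁ = x - t := eq_sub_of_add_eq e₁
      have h2 : A b₂ = -x - t := eq_sub_of_add_eq e₂
      rw [h1, h2, two_smul]; abel
    rw [_root_.map_smul, map_sub, hthis, smul_smul]
    norm_num

/-- An o-symmetric convex body of diameter 2 is in Behrend position iff it is in
Löwner position. -/
theorem behrend_iff_lowner_of_symm_diam_two {n : ℕ}
    (K : Set (EuclideanSpace ℝ (Fin n))) (hK : IsConvexBody K) (hsymm : K = -K)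
    (hD : Metric.diam K = 2) :
    InBehrendPosition K ↔ InLownerPosition K := by
  have hKb : Bornology.IsBounded K := hK.1.isBounded
  have hvolK0 : volume K ≠ 0 :=
    ((isOpen_interior.measure_pos volume hK.2.2).trans_le (measure_mono interior_subset)).ne'
  have hvolKtop : volume K ≠ ⊤ := hK.1.measure_lt_top.ne
  have hv : 0 < (volume K).toReal := ENNReal.toReal_pos hvolK0 hvolKtop
  set v := (volume K).toReal with hvdef
  -- K is not a subsingleton
  have hnsub : K.Nontrivial := by
    rw [← Set.not_subsingleton_iff]
    intro h
    rw [Metric.diam_subsingleton h] at hD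
    norm_num at hD
  constructor
  · -- Behrend → Löwner
    intro hB
    constructor
    · have h := aux_symm_subset hKb hsymm
      rw [hD] at h
      simpa using h
    · intro A t hsub
      have hsub' : K ⊆ ⇑A '' closedBall 0 1 := aux_center A t hsymm hsub
      have hcont : Continuous (⇑A.symm : EuclideanSpace ℝ (Fin n) → EuclideanSpace ℝ (Fin n)) :=
        A.symm.toLinearMap.continuous_of_finiteDimensional
      have h1 : ⇑A.symm '' K ⊆ closedBall 0 1 := by
        rintro _ ⟨x, hx, rfl⟩
        obtain ⟨b, hb, rfl⟩ := hsub' hx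
        simpa using hb
      have hd2 : Metric.diam (⇑A.symm '' K) ≤ 2 := by
        apply Metric.diam_le_of_forall_dist_le (by norm_num)
        intro x hx y hy
        have hx' := h1 hx; have hy' := h1 hy
        rw [mem_closedBall_zero_iff] at hx' hy'
        calc dist x y = ‖x - y‖ := dist_eq_norm x y
          _ ≤ ‖x‖ + ‖y‖ := norm_sub_le x y
          _ ≤ 2 := by linarith
      have hdpos : 0 < Metric.diam (⇑A.symm '' K) := by
        obtain ⟨x, hx, y, hy, hxy⟩ := hnsub
        have hbdd : Bornology.IsBounded (⇑A.symm '' K) := (hK.1.image hcont).isBounded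
        have hle := Metric.dist_le_diam_of_mem hbdd (Set.mem_image_of_mem _ hx)
          (Set.mem_image_of_mem _ hy)
        have hne : A.symm x ≠ A.symm y := fun h' => hxy (A.symm.injective h')
        have := dist_pos.mpr hne
        linarith
      have hiq := hB A.symm
      set a := |LinearMap.det (A.symm : EuclideanSpace ℝ (Fin n) →ₗ[ℝ] EuclideanSpace ℝ (Fin n))|
        with hadef
      have ha0 : 0 ≤ a := abs_nonneg _
      have hvol' : (volume (⇑A.symm '' K)).toReal = a * v := by
        rw [aux_vol_image, ENNReal.toReal_mul, ENNReal.toReal_ofReal ha0]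
      have key : a * v / 2 ^ n ≤ v / 2 ^ n := by
        calc a * v / 2 ^ n ≤ a * v / (Metric.diam (⇑A.symm '' K)) ^ n :=
              div_le_div_of_nonneg_left (by positivity) (pow_pos hdpos n)
                (pow_le_pow_left₀ hdpos.le hd2 n)
          _ = iq (⇑A.symm '' K) := by rw [iq, hvol']
          _ ≤ iq K := hiq
          _ = v / 2 ^ n := by rw [iq, hD]
      have h2 : (0:ℝ) < 2 ^ n := by positivity
      have hav : a * v ≤ v := by
        have h' := mul_le_mul_of_nonneg_right key h2.le
        rwa [div_mul_cancel₀ _ h2.ne', div_mul_cancel₀ _ h2.ne'] at h'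
      have hale : a ≤ 1 := by
        have := le_of_mul_le_mul_right (by linarith : a * v ≤ 1 * v) hv
        linarith
      have hprod := aux_det_mul A
      have habs : a * |LinearMap.det (A : EuclideanSpace ℝ (Fin n) →ₗ[ℝ]
          EuclideanSpace ℝ (Fin n))| = 1 := by
        rw [hadef, ← abs_mul, hprod, abs_one]
      have h1le : 1 ≤ |LinearMap.det (A : EuclideanSpace ℝ (Fin n) →ₗ[ℝ]
          EuclideanSpace ℝ (Fin n))| := by
        nlinarith [abs_nonneg (LinearMap.det (A : EuclideanSpace ℝ (Fin n) →ₗ[ℝ]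
          EuclideanSpace ℝ (Fin n)))]
      have himg : (fun x => A x + t) '' closedBall 0 1
          = (fun y => y + t) '' (⇑A '' closedBall 0 1) := by
        rw [← Set.image_comp]; rfl
      rw [himg, aux_translate, aux_vol_image]
      exact le_mul_of_one_le_left zero_le (ENNReal.one_le_ofReal.mpr h1le)
  · -- Löwner → Behrend
    rintro ⟨hsub, hell⟩ A
    have hcont : Continuous (⇑A : EuclideanSpace ℝ (Fin n) → EuclideanSpace ℝ (Fin n)) :=
      A.toLinearMap.continuous_of_finiteDimensional
    set d := Metric.diam (⇑A '' K) with hddef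
    have hAsymm : ⇑A '' K = -(⇑A '' K) := by
      ext z
      simp only [Set.mem_neg, Set.mem_image]
      constructor
      · rintro ⟨x, hx, rfl⟩
        refine ⟨-x, by rw [hsymm]; exact Set.neg_mem_neg.mpr hx, by simp⟩
      · rintro ⟨x, hx, hxz⟩
        refine ⟨-x, by rw [hsymm]; exact Set.neg_mem_neg.mpr hx, by rw [map_neg, hxz, neg_neg]⟩
    have hbdd : Bornology.IsBounded (⇑A '' K) := (hK.1.image hcont).isBounded
    have hA2 : ⇑A '' K ⊆ closedBall 0 (d / 2) := aux_symm_subset hbdd hAsymm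
    have hdpos : 0 < d := by
      obtain ⟨x, hx, y, hy, hxy⟩ := hnsub
      have hle := Metric.dist_le_diam_of_mem hbdd (Set.mem_image_of_mem _ hx)
        (Set.mem_image_of_mem _ hy)
      have hne : A x ≠ A y := fun h' => hxy (A.injective h')
      have := dist_pos.mpr hne
      linarith
    set c := d / 2 with hcdef
    have hc : 0 < c := by positivity
    set Cs := (LinearEquiv.smulOfNeZero ℝ (EuclideanSpace ℝ (Fin n)) c hc.ne').trans A.symm
      with hCs
    have hCapp : ∀ y, Cs y = A.symm (c • y) := fun y => rfl
    have hKC : K ⊆ (fun x => Cs x + 0) '' closedBall 0 1 := by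
      intro x hx
      have hAx : A x ∈ closedBall 0 (d / 2) := hA2 (Set.mem_image_of_mem _ hx)
      rw [mem_closedBall_zero_iff] at hAx
      refine ⟨c⁻¹ • (A x), ?_, ?_⟩
      · rw [mem_closedBall_zero_iff, norm_smul, norm_inv, Real.norm_eq_abs,
          abs_of_pos hc]
        calc c⁻¹ * ‖A x‖ ≤ c⁻¹ * c := by gcongr
          _ = 1 := inv_mul_cancel₀ hc.ne'
      · show Cs (c⁻¹ • A x) + 0 = x
        rw [hCapp, smul_smul, mul_inv_cancel₀ hc.ne', one_smul, add_zero,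
          LinearEquiv.symm_apply_apply]
    have hv1 := hell Cs 0 hKC
    have himg0 : (fun x => Cs x + 0) '' closedBall 0 1 = ⇑Cs '' closedBall 0 1 := by
      simp only [add_zero]
    rw [himg0, aux_vol_image] at hv1
    have hBne : volume (closedBall (0 : EuclideanSpace ℝ (Fin n)) 1) ≠ 0 :=
      (measure_closedBall_pos volume 0 one_pos).ne'
    have hBtop : volume (closedBall (0 : EuclideanSpace ℝ (Fin n)) 1) ≠ ⊤ :=
      measure_closedBall_lt_top.ne
    have h1 : 1 ≤ ENNReal.ofReal |LinearMap.det (Cs : EuclideanSpace ℝ (Fin n) →ₗ[ℝ]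
        EuclideanSpace ℝ (Fin n))| := by
      nth_rewrite 1 [← one_mul (volume (closedBall (0 : EuclideanSpace ℝ (Fin n)) 1))] at hv1
      exact (ENNReal.mul_le_mul_iff_left hBne hBtop).mp hv1
    have h1' : 1 ≤ |LinearMap.det (Cs : EuclideanSpace ℝ (Fin n) →ₗ[ℝ]
        EuclideanSpace ℝ (Fin n))| := ENNReal.one_le_ofReal.mp h1
    have hdetC : LinearMap.det (Cs : EuclideanSpace ℝ (Fin n) →ₗ[ℝ] EuclideanSpace ℝ (Fin n))
        = LinearMap.det (A.symm : EuclideanSpace ℝ (Fin n) →ₗ[ℝ]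
            EuclideanSpace ℝ (Fin n)) * c ^ n := by
      have hcomp : (Cs : EuclideanSpace ℝ (Fin n) →ₗ[ℝ] EuclideanSpace ℝ (Fin n))
          = (A.symm : EuclideanSpace ℝ (Fin n) →ₗ[ℝ] EuclideanSpace ℝ (Fin n)).comp
            ((LinearEquiv.smulOfNeZero ℝ (EuclideanSpace ℝ (Fin n)) c hc.ne' :
              EuclideanSpace ℝ (Fin n) →ₗ[ℝ] EuclideanSpace ℝ (Fin n))) :=
        LinearMap.ext fun x => rfl
      rw [hcomp, LinearMap.det_comp, aux_det_smul]
    have hprod := aux_det_mul A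
    set D := |LinearMap.det (A : EuclideanSpace ℝ (Fin n) →ₗ[ℝ] EuclideanSpace ℝ (Fin n))|
      with hDdef
    set a := |LinearMap.det (A.symm : EuclideanSpace ℝ (Fin n) →ₗ[ℝ]
      EuclideanSpace ℝ (Fin n))| with hadef
    have habs : a * D = 1 := by rw [hadef, hDdef, ← abs_mul, hprod, abs_one]
    have h1c : 1 ≤ a * c ^ n := by
      rw [hdetC, abs_mul, abs_pow, abs_of_pos hc] at h1'
      exact h1'
    have hDle : D ≤ c ^ n := by
      have hD0 : 0 ≤ D := abs_nonneg _
      nlinarith [mul_le_mul_of_nonneg_left h1c hD0]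
    -- final inequality
    show iq (⇑A '' K) ≤ iq K
    rw [iq, iq, hD, aux_vol_image, ENNReal.toReal_mul, ENNReal.toReal_ofReal (abs_nonneg _),
      ← hddef, ← hDdef, ← hvdef]
    calc D * v / d ^ n ≤ (d / 2) ^ n * v / d ^ n :=
          div_le_div_of_nonneg_right
            (mul_le_mul_of_nonneg_right (by rw [← hcdef]; exact hDle) hv.le)
            (pow_pos hdpos n).le
      _ = v / 2 ^ n := by
          rw [div_pow]
          field_simp
end

section
/- A convex body K in ℝ^n is in Behrend position if and only if its difference body K − K = {x − y : x, y ∈ K} is in Behrend position. -/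
open MeasureTheory Metric Set Pointwise
open scoped RealInnerProductSpace

lemma ratio_iff {x u v c : ℝ} (hx : 0 < x) (hu : 0 < u) (hv : 0 < v) :
    c * x / v ≤ x / u ↔ c * u ≤ v := by
  rw [div_le_div_iff₀ hv hu, show c * x * u = x * (c * u) by ring, mul_le_mul_iff_right₀ hx]

lemma isCompact_sub' {E : Type*} [NormedAddCommGroup E] {s t : Set E}
    (hs : IsCompact s) (ht : IsCompact t) : IsCompact (s - t) := by
  rw [← Set.image2_sub, ← Set.image_prod]
  exact (hs.prod ht).image (continuous_fst.sub continuous_snd)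

lemma diam_sub_self {E : Type*} [NormedAddCommGroup E] [NormedSpace ℝ E]
    {s : Set E} (hb : Bornology.IsBounded s) :
    Metric.diam (s - s) = 2 * Metric.diam s := by
  rcases s.eq_empty_or_nonempty with rfl | hne
  · simp
  have hbb : Bornology.IsBounded (s - s) := hb.sub hb
  apply le_antisymm
  · apply Metric.diam_le_of_forall_dist_le (by positivity)
    rintro z ⟨a, ha, b, hb', rfl⟩ w ⟨c, hc, d, hd, rfl⟩
    have h1 : dist (a - b) (c - d) ≤ dist a c + dist b d := by
      rw [dist_eq_norm, dist_eq_norm, dist_eq_norm,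
        show a - b - (c - d) = (a - c) - (b - d) by abel]
      exact norm_sub_le _ _
    have h2 : dist a c ≤ Metric.diam s := Metric.dist_le_diam_of_mem hb ha hc
    have h3 : dist b d ≤ Metric.diam s := Metric.dist_le_diam_of_mem hb hb' hd
    linarith
  · have key : ∀ x ∈ s, ∀ y ∈ s, dist x y ≤ Metric.diam (s - s) / 2 := by
      intro x hx y hy
      have h1 : dist (x - y) (y - x) ≤ Metric.diam (s - s) :=
        Metric.dist_le_diam_of_mem hbb (Set.sub_mem_sub hx hy) (Set.sub_mem_sub hy hx)
      have h2 : dist (x - y) (y - x) = 2 * dist x y := by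
        rw [dist_eq_norm, dist_eq_norm,
          show x - y - (y - x) = (2 : ℝ) • (x - y) by
            rw [two_smul]; abel]
        rw [norm_smul]
        norm_num
      linarith
    have := Metric.diam_le_of_forall_dist_le
      (C := Metric.diam (s - s) / 2) (by positivity) key
    linarith

/-- A convex body is in Behrend position iff its difference body `K - K` is. -/
theorem behrend_iff_difference_body_behrend {n : ℕ}
    (K : Set (EuclideanSpace ℝ (Fin n))) (hK : IsConvexBody K) :
    InBehrendPosition K ↔ InBehrendPosition (K - K) := by
  obtain ⟨hKc, hKconv, hKint⟩ := hK
  rcases Nat.eq_zero_or_pos n with hn | hn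
  · subst hn
    haveI : Subsingleton (EuclideanSpace ℝ (Fin 0)) :=
      ⟨fun a b => by ext i; exact Fin.elim0 i⟩
    constructor <;> intro _ A <;>
      · have hA : (A : EuclideanSpace ℝ (Fin 0) → EuclideanSpace ℝ (Fin 0)) = id :=
          funext fun x => Subsingleton.elim _ _
        rw [hA, image_id]
  -- main case
  have hKne : K.Nonempty := hKint.mono interior_subset
  have hKb : Bornology.IsBounded K := hKc.isBounded
  have hvolK : 0 < volume K := Measure.measure_pos_of_nonempty_interior _ hKint
  have ha : 0 < (volume K).toReal :=
    ENNReal.toReal_pos hvolK.ne' hKc.measure_lt_top.ne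
  -- interior of K - K is nonempty
  have hKKint : (interior (K - K)).Nonempty := by
    obtain ⟨y, hy⟩ := hKne
    have hopen : IsOpen (interior K - ({y} : Set (EuclideanSpace ℝ (Fin n)))) :=
      IsOpen.sub_right isOpen_interior
    have hsub : interior K - ({y} : Set (EuclideanSpace ℝ (Fin n))) ⊆ K - K :=
      Set.sub_subset_sub interior_subset (by simpa using hy)
    obtain ⟨x, hx⟩ := hKint
    exact ⟨x - y, interior_maximal hsub hopen (Set.sub_mem_sub hx rfl)⟩
  have hKKc : IsCompact (K - K) := isCompact_sub' hKc hKc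
  have hb : 0 < (volume (K - K)).toReal :=
    ENNReal.toReal_pos (Measure.measure_pos_of_nonempty_interior _ hKKint).ne'
      hKKc.measure_lt_top.ne
  -- positive diameter
  have hdK : 0 < Metric.diam K := by
    obtain ⟨x, hx⟩ := hKint
    obtain ⟨r, hr, hball⟩ := Metric.isOpen_iff.1 isOpen_interior x hx
    set e0 : EuclideanSpace ℝ (Fin n) := EuclideanSpace.single ⟨0, hn⟩ (r / 2)
    have he0 : ‖e0‖ = r / 2 := by
      rw [EuclideanSpace.norm_single]
      simp [abs_of_pos hr, abs_of_pos (half_pos hr)]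
    have hy : x + e0 ∈ K := by
      apply interior_subset; apply hball
      rw [Metric.mem_ball, dist_eq_norm, add_sub_cancel_left, he0]
      linarith
    have : dist (x + e0) x ≤ Metric.diam K :=
      Metric.dist_le_diam_of_mem hKb hy (interior_subset hx)
    rw [dist_eq_norm, add_sub_cancel_left, he0] at this
    linarith
  -- two distinct points of K
  obtain ⟨p, hp, q, hq, hpq⟩ : ∃ p ∈ K, ∃ q ∈ K, p ≠ q := by
    by_contra h
    push_neg at h
    exact hdK.ne' (Metric.diam_subsingleton fun p hp q hq => h p hp q hq)
  -- the key pointwise equivalence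
  have main : ∀ A : EuclideanSpace ℝ (Fin n) ≃ₗ[ℝ] EuclideanSpace ℝ (Fin n),
      (iq (A '' K) ≤ iq K ↔ iq (A '' (K - K)) ≤ iq (K - K)) := by
    intro A
    have hAcont : Continuous A := by exact A.toLinearMap.continuous_of_finiteDimensional
    have hAKc : IsCompact (A '' K) := hKc.image hAcont
    have he : 0 < Metric.diam (A '' K) := by
      have h1 : dist (A p) (A q) ≤ Metric.diam (A '' K) :=
        Metric.dist_le_diam_of_mem hAKc.isBounded ⟨p, hp, rfl⟩ ⟨q, hq, rfl⟩
      have h2 : 0 < dist (A p) (A q) :=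
        dist_pos.2 fun h => hpq (A.injective h)
      linarith
    set c : ℝ := |LinearMap.det (A : EuclideanSpace ℝ (Fin n) →ₗ[ℝ] EuclideanSpace ℝ (Fin n))|
    have hc : 0 ≤ c := abs_nonneg _
    have hvol : ∀ s : Set (EuclideanSpace ℝ (Fin n)),
        volume (A '' s) = ENNReal.ofReal c * volume s := by
      intro s
      have := volume.addHaar_image_linearMap
        (A : EuclideanSpace ℝ (Fin n) →ₗ[ℝ] EuclideanSpace ℝ (Fin n)) s
      simpa using this
    have himg : A '' (K - K) = A '' K - A '' K := by
      ext z
      simp only [Set.mem_image, Set.mem_sub]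
      constructor
      · rintro ⟨w, ⟨x, hx, y, hy, rfl⟩, rfl⟩
        exact ⟨A x, ⟨x, hx, rfl⟩, A y, ⟨y, hy, rfl⟩, (map_sub A x y).symm⟩
      · rintro ⟨x', ⟨x, hx, rfl⟩, y', ⟨y, hy, rfl⟩, rfl⟩
        exact ⟨x - y, ⟨x, hx, y, hy, rfl⟩, map_sub A x y⟩
    have hdiff : Metric.diam (K - K) = 2 * Metric.diam K := diam_sub_self hKb
    have hdiffA : Metric.diam (A '' (K - K)) = 2 * Metric.diam (A '' K) := by
      rw [himg]; exact diam_sub_self hAKc.isBounded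
    have hiq1 : iq (A '' K) = c * (volume K).toReal / (Metric.diam (A '' K)) ^ n := by
      unfold iq
      rw [hvol K, ENNReal.toReal_mul, ENNReal.toReal_ofReal hc]
    have hiq3 : iq (A '' (K - K)) =
        c * (volume (K - K)).toReal / (2 * Metric.diam (A '' K)) ^ n := by
      unfold iq
      rw [hvol (K - K), ENNReal.toReal_mul, ENNReal.toReal_ofReal hc, hdiffA]
    have hiq4 : iq (K - K) = (volume (K - K)).toReal / (2 * Metric.diam K) ^ n := by
      unfold iq; rw [hdiff]
    rw [hiq1, hiq3, hiq4, show iq K = (volume K).toReal / (Metric.diam K) ^ n from rfl]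
    rw [ratio_iff ha (pow_pos hdK n) (pow_pos he n),
      ratio_iff hb (pow_pos (by linarith : (0:ℝ) < 2 * Metric.diam K) n)
        (pow_pos (by linarith : (0:ℝ) < 2 * Metric.diam (A '' K)) n)]
    rw [mul_pow, mul_pow, show c * ((2:ℝ) ^ n * Metric.diam K ^ n)
        = (2:ℝ) ^ n * (c * Metric.diam K ^ n) by ring,
      mul_le_mul_iff_right₀ (pow_pos (by norm_num : (0:ℝ) < 2) n)]
  exact forall_congr' main
end

section
/- Let u_1, …, u_m be unit vectors in ℝ^n and λ_1, …, λ_m ≥ 0 scalars such that Σ_{i=1}^m λ_i u_i u_i^T = I_n. Then for every 1 ≤ i ≤ n, the binomial coefficient C(n, i) equals Σ_{J ∈ C([m], i)} λ_J · det((U_J)^T U_J), where the sum runs over all i-element subsets J of {1, …, m}, λ_J = Π_{j ∈ J} λ_j, and U_J ∈ ℝ^{n×i} is the matrix whose columns are the vectors u_j with j ∈ J. -/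
open MeasureTheory Metric Set

/-- determinant of a matrix that agrees with `M` on rows in `S` and with the identity on
other rows equals the determinant of the principal submatrix `M_S`. -/
lemma det_rows_piecewise_one {m : ℕ} (M : Matrix (Fin m) (Fin m) ℝ) (S : Finset (Fin m)) :
    Matrix.det (Matrix.of fun j k =>
        if j ∈ S then M j k else (1 : Matrix (Fin m) (Fin m) ℝ) j k) =
      Matrix.det (Matrix.of fun (j k : S) => M j k) := by
  classical
  let e : {x // x ∈ S} ⊕ {x // x ∉ S} ≃ Fin m := Equiv.sumCompl (· ∈ S)
  rw [← Matrix.det_submatrix_equiv_self e]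
  have hsub : (Matrix.of fun j k =>
        if j ∈ S then M j k else (1 : Matrix (Fin m) (Fin m) ℝ) j k).submatrix e e =
      Matrix.fromBlocks (Matrix.of fun (j k : S) => M j k)
        (Matrix.of fun (j : S) (k : {x // x ∉ S}) => M j k) 0 1 := by
    ext j k
    cases j with
    | inl j =>
      cases k with
      | inl k => simp [e, Matrix.submatrix, j.2]
      | inr k => simp [e, Matrix.submatrix, j.2]
    | inr j =>
      cases k with
      | inl k =>
        have : (j : Fin m) ≠ (k : Fin m) := by
          intro h
          exact j.2 (h ▸ k.2)
        simp [e, Matrix.submatrix, j.2, Matrix.one_apply, this]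
      | inr k =>
        by_cases h : (j : Fin m) = (k : Fin m)
        · have : j = k := Subtype.ext h
          simp only [e, Matrix.submatrix, Equiv.sumCompl_apply_inr, Matrix.of_apply,
            Matrix.fromBlocks_apply₂₂, this]
          simp [Matrix.one_apply, k.2]
        · have : j ≠ k := fun hc => h (congrArg _ hc)
          simp [e, Matrix.submatrix, j.2, Matrix.one_apply, h, this]
  rw [hsub, Matrix.det_fromBlocks_zero₂₁, Matrix.det_one, mul_one]

/-- expansion of `det (1 + t • M)` as a sum of principal minors. -/
lemma det_one_add_smul_eq_sum_minors {m : ℕ} (t : ℝ) (M : Matrix (Fin m) (Fin m) ℝ) :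
    Matrix.det (1 + t • M) =
      ∑ S : Finset (Fin m), t ^ S.card * Matrix.det (Matrix.of fun (j k : S) => M j k) := by
  classical
  set f := (Matrix.detRowAlternating :
      (Fin m → ℝ) [⋀^Fin m]→ₗ[ℝ] ℝ).toMultilinearMap with hf
  have hdet : ∀ X : Matrix (Fin m) (Fin m) ℝ, Matrix.det X = f X := fun X => rfl
  have h1 : Matrix.det (1 + t • M) =
      f ((fun j => t • M j) + (fun j => (1 : Matrix (Fin m) (Fin m) ℝ) j)) := by
    refine Eq.trans ?_ (hdet _)
    congr 1
    ext j k
    simp [Matrix.add_apply, add_comm]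
  rw [h1, f.map_add_univ]
  refine Finset.sum_congr rfl fun S _ => ?_
  set m0 : Fin m → Fin m → ℝ :=
    S.piecewise (fun j => M j) (fun j => (1 : Matrix (Fin m) (Fin m) ℝ) j) with hm0
  have hp : S.piecewise (fun j => t • M j) (fun j => (1 : Matrix (Fin m) (Fin m) ℝ) j) =
      S.piecewise (fun j => (fun _ : Fin m => t) j • m0 j) m0 := by
    funext j
    by_cases h : j ∈ S <;> simp [Finset.piecewise, h, hm0]
  rw [hp, f.map_piecewise_smul]
  have hm0det : f m0 =
      Matrix.det (Matrix.of fun (j k : S) => M j k) := by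
    refine (hdet _).symm.trans ?_
    rw [← det_rows_piecewise_one M S]
    congr 1
    funext j k
    by_cases h : j ∈ S <;> simp [Finset.piecewise, h, hm0]
  rw [hm0det, Finset.prod_const, smul_eq_mul]

/-- Cauchy–Binet corollary: if `I_n = Σ λ_i u_i u_iᵀ` with unit vectors `u_i` and
nonnegative scalars `λ_i`, then for every `1 ≤ i ≤ n`,
`C(n,i) = Σ_{J ⊆ [m], |J| = i} λ_J · det((U_J)ᵀ U_J)`. -/
theorem choose_eq_sum_gram_dets {n m : ℕ} (u : Fin m → Fin n → ℝ) (lam : Fin m → ℝ)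
    (hu : ∀ i, ∑ a, (u i a) ^ 2 = 1) (hlam : ∀ i, 0 ≤ lam i)
    (hdecomp : ∑ i, lam i • Matrix.vecMulVec (u i) (u i) = (1 : Matrix (Fin n) (Fin n) ℝ))
    (i : ℕ) (hi1 : 1 ≤ i) (hi2 : i ≤ n) :
    (Nat.choose n i : ℝ) =
      ∑ J ∈ Finset.powersetCard i (Finset.univ : Finset (Fin m)),
        (∏ j ∈ J, lam j) *
          Matrix.det (Matrix.of fun (j k : J) => ∑ a, u j.1 a * u k.1 a) := by
  classical
  set M : Matrix (Fin m) (Fin m) ℝ :=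
    Matrix.of fun j k => lam j * ∑ a, u j a * u k a with hM
  set A : Matrix (Fin m) (Fin n) ℝ := Matrix.of fun j a => lam j * u j a with hA
  set B : Matrix (Fin n) (Fin m) ℝ := Matrix.of fun a k => u k a with hB
  have hBA : B * A = 1 := by
    ext a b
    have h := congrFun (congrFun hdecomp a) b
    simp only [Matrix.sum_apply, Matrix.smul_apply, Matrix.vecMulVec_apply,
      smul_eq_mul] at h
    rw [← h]
    simp [Matrix.mul_apply, hA, hB]
    exact Finset.sum_congr rfl fun j _ => by ring
  have hMAB : M = A * B := by
    ext j k
    simp only [Matrix.mul_apply, hM, hA, hB, Matrix.of_apply, Finset.mul_sum]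
    exact Finset.sum_congr rfl fun a _ => by ring
  have key : ∀ t : ℝ, Matrix.det (1 + t • M) = (1 + t) ^ n := by
    intro t
    rw [hMAB, ← Matrix.smul_mul, Matrix.det_one_add_mul_comm, Matrix.mul_smul, hBA]
    have h1 : (1 : Matrix (Fin n) (Fin n) ℝ) + t • (1 : Matrix (Fin n) (Fin n) ℝ)
        = (1 + t) • (1 : Matrix (Fin n) (Fin n) ℝ) := by
      ext a b
      by_cases h : a = b <;> simp [Matrix.one_apply, h, add_mul]
    rw [h1, Matrix.det_smul, Matrix.det_one, Fintype.card_fin, mul_one]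
  have hpoly : (∑ S : Finset (Fin m),
        Polynomial.C (Matrix.det (Matrix.of fun (j k : S) => M j k)) * Polynomial.X ^ S.card)
      = (1 + Polynomial.X : Polynomial ℝ) ^ n := by
    apply Polynomial.funext
    intro t
    rw [Polynomial.eval_finset_sum]
    simp only [Polynomial.eval_mul, Polynomial.eval_pow, Polynomial.eval_C,
      Polynomial.eval_X, Polynomial.eval_add, Polynomial.eval_one]
    rw [← key t, det_one_add_smul_eq_sum_minors]
    exact Finset.sum_congr rfl fun S _ => mul_comm _ _
  have hcoeff := congrArg (fun p => Polynomial.coeff p i) hpoly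
  simp only [Polynomial.finset_sum_coeff, Polynomial.coeff_C_mul, Polynomial.coeff_X_pow,
    Polynomial.coeff_one_add_X_pow, mul_ite, mul_one, mul_zero] at hcoeff
  rw [← Finset.sum_filter] at hcoeff
  rw [← hcoeff]
  have hfilter : (Finset.univ.filter fun S : Finset (Fin m) => i = S.card)
      = Finset.powersetCard i (Finset.univ : Finset (Fin m)) := by
    rw [Finset.powersetCard_eq_filter, ← Finset.powerset_univ]
    apply Finset.filter_congr
    intro S _
    exact ⟨fun h => h.symm, fun h => h.symm⟩
  rw [hfilter]
  refine Finset.sum_congr rfl fun J _ => ?_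
  have : Matrix.det (Matrix.of fun (j k : J) => M j k)
      = (∏ j : J, lam j) *
          Matrix.det (Matrix.of fun (j k : J) => ∑ a, u j.1 a * u k.1 a) := by
    rw [← Matrix.det_mul_column]
    rfl
  rw [this, Finset.prod_coe_sort]
end

section
/- Let n ≤ m ≤ n(n+1)/2, let u_1, …, u_m be unit vectors in ℝ^n, and let λ_1, …, λ_m ≥ 0 be scalars such that Σ_{i=1}^m λ_i u_i u_i^T = I_n. Then for every 1 ≤ j ≤ n, there exist indices 1 ≤ i_1 < … < i_j ≤ m such that the j-dimensional volume of the simplex conv{0, u_{i_1}, …, u_{i_j}} satisfies vol_j(conv{0, u_{i_1}, …, u_{i_j}})² ≥ C(n, j)·(m/n)^j / (C(m, j)·(j!)²). Equivalently, det((U_J)^T U_J) ≥ C(n, j)·(m/n)^j / C(m, j) for the index set J = {i_1, …, i_j}, where U_J ∈ ℝ^{n×j} has columns u_{i_1}, …, u_{i_j}. -/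
open Finset Matrix

namespace DRaux
set_option linter.unusedSectionVars false
set_option linter.unusedVariables false
set_option maxHeartbeats 1600000

lemma esymm_zero' (s : Multiset ℝ) : s.esymm 0 = 1 := by
  simp [Multiset.esymm, Multiset.powersetCard_zero_left]

lemma esymm_cons (a : ℝ) (s : Multiset ℝ) (k : ℕ) :
    (a ::ₘ s).esymm (k + 1) = s.esymm (k + 1) + a * s.esymm k := by
  rw [Multiset.esymm, Multiset.powersetCard_cons, Multiset.map_add, Multiset.sum_add,
    Multiset.map_map]
  rw [Multiset.esymm, Multiset.esymm]
  congr 1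
  rw [← Multiset.sum_map_mul_left]
  congr 1
  exact Multiset.map_congr rfl fun t _ => by simp

lemma esymm_eq_zero_of_card_lt {s : Multiset ℝ} {k : ℕ} (h : Multiset.card s < k) :
    s.esymm k = 0 := by
  have : s.powersetCard k = 0 := by
    rw [Multiset.powersetCard_eq_empty]
    exact h
  simp [Multiset.esymm, this]

lemma esymm_nonneg {s : Multiset ℝ} (hs : ∀ x ∈ s, 0 ≤ x) (k : ℕ) : 0 ≤ s.esymm k := by
  refine Multiset.sum_nonneg ?_
  intro x hx
  rw [Multiset.mem_map] at hx
  obtain ⟨t, ht, rfl⟩ := hx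
  rw [Multiset.mem_powersetCard] at ht
  exact Multiset.prod_nonneg fun y hy => hs y (Multiset.mem_of_le ht.1 hy)

lemma esymm_pos_of_succ {s : Multiset ℝ} (hs : ∀ x ∈ s, 0 ≤ x) {k : ℕ}
    (h : 0 < s.esymm (k + 1)) : 0 < s.esymm k := by
  -- find a (k+1)-submultiset with positive product
  have h2 : ∃ x ∈ (s.powersetCard (k+1)).map Multiset.prod, 0 < x := by
    by_contra hc
    push_neg at hc
    have : s.esymm (k+1) ≤ 0 := by
      have := Multiset.sum_le_card_nsmul ((s.powersetCard (k+1)).map Multiset.prod) 0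
        (fun x hx => hc x hx)
      simpa [Multiset.esymm] using this
    linarith
  obtain ⟨x, hx, hxpos⟩ := h2
  rw [Multiset.mem_map] at hx
  obtain ⟨t, ht, rfl⟩ := hx
  rw [Multiset.mem_powersetCard] at ht
  obtain ⟨hts, htc⟩ := ht
  -- t is nonempty
  have : t ≠ 0 := by rintro rfl; simp at htc
  obtain ⟨b, hb⟩ := Multiset.exists_mem_of_ne_zero this
  obtain ⟨t', rfl⟩ := Multiset.exists_cons_of_mem hb
  rw [Multiset.prod_cons] at hxpos
  have ht's : t' ≤ s := le_trans (Multiset.le_cons_self t' b) hts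
  have ht'c : Multiset.card t' = k := by simpa using htc
  have ht'pos : 0 < t'.prod := by
    have hb : 0 ≤ b := hs b (Multiset.mem_of_le hts (Multiset.mem_cons_self b t'))
    have h0 : 0 ≤ t'.prod := Multiset.prod_nonneg fun y hy => hs y (Multiset.mem_of_le ht's hy)
    nlinarith
  -- esymm k ≥ prod t'
  have hmem : t'.prod ∈ (s.powersetCard k).map Multiset.prod :=
    Multiset.mem_map_of_mem _ (Multiset.mem_powersetCard.mpr ⟨ht's, ht'c⟩)
  have := Multiset.single_le_sum (fun y hy => by
    rw [Multiset.mem_map] at hy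
    obtain ⟨t2, ht2, rfl⟩ := hy
    rw [Multiset.mem_powersetCard] at ht2
    exact Multiset.prod_nonneg fun y hy => hs y (Multiset.mem_of_le ht2.1 hy)) _ hmem
  calc (0:ℝ) < t'.prod := ht'pos
  _ ≤ s.esymm k := this


noncomputable def p (s : Multiset ℝ) (k : ℕ) : ℝ :=
  s.esymm k / ((Multiset.card s).choose k)


lemma p_zero (s : Multiset ℝ) : p s 0 = 1 := by simp [p, esymm_zero']

lemma p_eq_zero_of_card_lt {s : Multiset ℝ} {k : ℕ} (h : Multiset.card s < k) : p s k = 0 := by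
  simp [p, esymm_eq_zero_of_card_lt h]


lemma p_cons (a : ℝ) (s : Multiset ℝ) (k : ℕ) :
    p (a ::ₘ s) (k + 1) =
      (((Multiset.card s : ℝ) - k) * p s (k + 1) + ((k : ℝ) + 1) * a * p s k) /
        ((Multiset.card s : ℝ) + 1) := by
  have hcard : Multiset.card (a ::ₘ s) = Multiset.card s + 1 := by simp
  rw [p, p, p, hcard, esymm_cons]
  rcases lt_or_ge (Multiset.card s) k with h | h
  · rw [esymm_eq_zero_of_card_lt (s := s) (k := k + 1) (by omega),
      esymm_eq_zero_of_card_lt (s := s) (k := k) (by omega)]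
    simp
  rcases eq_or_lt_of_le h with hmk | hlt
  · rw [esymm_eq_zero_of_card_lt (s := s) (k := k + 1) (by omega)]
    rw [← hmk]
    simp only [Nat.choose_self, Nat.choose_succ_self]
    have hm1 : (0:ℝ) < (k:ℝ) + 1 := by positivity
    field_simp
    ring
  · have hk1m : k + 1 ≤ Multiset.card s := hlt
    set m := Multiset.card s with hm
    have hC1 : (0:ℝ) < (m.choose (k+1) : ℝ) := by exact_mod_cast Nat.choose_pos (by omega)
    have hC0 : (0:ℝ) < (m.choose k : ℝ) := by exact_mod_cast Nat.choose_pos (by omega)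
    have hC2 : (0:ℝ) < ((m+1).choose (k+1) : ℝ) := by exact_mod_cast Nat.choose_pos (by omega)
    have id2 : (m+1) * m.choose k = (m+1).choose (k+1) * (k+1) := by
      simpa [Nat.succ_eq_add_one] using Nat.add_one_mul_choose_eq m k
    have id1 : (m+1) * m.choose (k+1) = (m+1).choose (k+1) * (m - k) := by
      have h1 := Nat.add_one_mul_choose_eq m (k+1)
      have h2 := Nat.choose_succ_right_eq (m+1) (k+1)
      rw [h1, h2]
      congr 1
      omega
    have id1' : ((m:ℝ)+1) * (m.choose (k+1):ℝ) = ((m+1).choose (k+1):ℝ) * ((m:ℝ) - (k:ℝ)) := by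
      have hc : ((m:ℝ) - (k:ℝ)) = ((m - k : ℕ) : ℝ) := by
        rw [Nat.cast_sub (by omega)]
      rw [hc]
      exact_mod_cast id1
    have id2' : ((m:ℝ)+1) * (m.choose k:ℝ) = ((m+1).choose (k+1):ℝ) * ((k:ℝ)+1) := by
      exact_mod_cast id2
    have hm1 : (0:ℝ) < (m:ℝ) + 1 := by positivity
    field_simp
    linear_combination (s.esymm (k+1) * ((m.choose k : ℝ))) * id1' +
      (a * s.esymm k * ((m.choose (k+1) : ℝ))) * id2'


lemma p_nonneg {s : Multiset ℝ} (hs : ∀ x ∈ s, 0 ≤ x) (k : ℕ) : 0 ≤ p s k :=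
  div_nonneg (esymm_nonneg hs k) (by positivity)

lemma p_pos_of_succ {s : Multiset ℝ} (hs : ∀ x ∈ s, 0 ≤ x) {k : ℕ}
    (h : 0 < p s (k + 1)) : 0 < p s k := by
  have hcard : k + 1 ≤ Multiset.card s := by
    by_contra hc
    rw [p_eq_zero_of_card_lt (by omega)] at h
    exact lt_irrefl _ h
  have he : 0 < s.esymm (k + 1) := by
    rcases eq_or_lt_of_le (esymm_nonneg hs (k+1)) with h0 | h0
    · exfalso
      rw [p, ← h0, zero_div] at h
      exact lt_irrefl _ h
    · exact h0
  have he' : 0 < s.esymm k := esymm_pos_of_succ hs he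
  have hC : (0:ℝ) < ((Multiset.card s).choose k : ℝ) := by
    exact_mod_cast Nat.choose_pos (by omega)
  exact div_pos he' hC

lemma chain (t : Multiset ℝ) (ht : ∀ x ∈ t, 0 ≤ x)
    (hN : ∀ k, p t k * p t (k + 2) ≤ p t (k + 1) ^ 2) :
    ∀ d k, p t k * p t (k + d + 2) ≤ p t (k + 1) * p t (k + d + 1) := by
  intro d
  induction d with
  | zero => intro k; simpa [sq] using hN k
  | succ d ih =>
    intro k
    simp only [show k + (d + 1) + 2 = (k + d + 1) + 2 from by omega,
      show k + (d + 1) + 1 = k + d + 2 from by omega]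
    rcases eq_or_lt_of_le (p_nonneg ht ((k + d + 1) + 2)) with h0 | hp3
    · rw [← h0, mul_zero]
      exact mul_nonneg (p_nonneg ht _) (p_nonneg ht _)
    · have hp2 : 0 < p t (k + d + 2) := p_pos_of_succ ht hp3
      have hp1 : 0 < p t (k + d + 1) := p_pos_of_succ ht hp2
      have hNd := hN (k + d + 1)
      have ihk := ih k
      nlinarith [mul_le_mul_of_nonneg_right ihk hp3.le,
        mul_le_mul_of_nonneg_left hNd (p_nonneg ht (k + 1)),
        p_nonneg ht k, p_nonneg ht (k + 1)]

theorem newton : ∀ (s : Multiset ℝ), (∀ x ∈ s, 0 ≤ x) →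
    ∀ k, p s k * p s (k + 2) ≤ p s (k + 1) ^ 2 := by
  intro s
  induction s using Multiset.induction_on with
  | empty =>
    intro _ k
    rw [p_eq_zero_of_card_lt (s := 0) (k := k + 2) (by simp), mul_zero]
    positivity
  | cons a t IH =>
    intro hs k
    have ha : 0 ≤ a := hs a (Multiset.mem_cons_self a t)
    have ht : ∀ x ∈ t, 0 ≤ x := fun x hx => hs x (Multiset.mem_cons_of_mem hx)
    have hN := IH ht
    have hch := chain t ht hN
    have hM : (0:ℝ) < (Multiset.card t : ℝ) + 1 := by positivity
    rcases k with _ | k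
    · -- k = 0 case
      rw [p_zero, one_mul]
      rw [show (2:ℕ) = 1 + 1 from rfl, p_cons, show (1:ℕ) = 0 + 1 from rfl, p_cons, p_zero]
      push_cast
      have hN0 := hN 0
      rw [p_zero, one_mul] at hN0
      have h1 : ((Multiset.card t : ℝ) - 1) * p t 2 ≤
          ((Multiset.card t : ℝ) - 1) * p t 1 ^ 2 := by
        rcases Nat.eq_zero_or_pos (Multiset.card t) with h0 | h0
        · rw [p_eq_zero_of_card_lt (by omega), p_eq_zero_of_card_lt (by omega)]
          simp
        · have : (0:ℝ) ≤ (Multiset.card t : ℝ) - 1 := by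
            have : (1:ℝ) ≤ (Multiset.card t : ℝ) := by exact_mod_cast h0
            linarith
          exact mul_le_mul_of_nonneg_left hN0 this
      rw [div_pow, div_le_div_iff₀ (by positivity) (by positivity)]
      nlinarith [sq_nonneg (p t 1 - a), sq_nonneg ((Multiset.card t : ℝ) + 1), hM,
        mul_nonneg (le_of_lt hM) (sq_nonneg (p t 1 - a)),
        mul_le_mul_of_nonneg_left h1 (le_of_lt (by positivity : (0:ℝ) < ((Multiset.card t : ℝ) + 1) ^ 2)),
        mul_le_mul_of_nonneg_left h1 (le_of_lt hM)]
    · -- k + 1 case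
      rw [show k + 1 + 2 = (k + 2) + 1 from by omega, show k + 1 + 1 = (k + 1) + 1 from by omega,
        p_cons, p_cons, p_cons]
      push_cast
      set μ := (Multiset.card t : ℝ) with hμ
      set v := p t k
      set x := p t (k + 1)
      set y := p t (k + 2)
      set z := p t (k + 3)
      have hv : 0 ≤ v := p_nonneg ht k
      have hx : 0 ≤ x := p_nonneg ht (k + 1)
      have hy : 0 ≤ y := p_nonneg ht (k + 2)
      have hz : 0 ≤ z := p_nonneg ht (k + 3)
      have N1 : v * y ≤ x ^ 2 := hN k
      have N2 : x * z ≤ y ^ 2 := by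
        have := hN (k + 1)
        simpa [show k + 1 + 2 = k + 3 from by omega, show k + 1 + 1 = k + 2 from by omega] using this
      have CH : v * z ≤ x * y := by
        have := hch 1 k
        simpa [show k + 1 + 2 = k + 3 from by omega, show k + 1 + 1 = k + 2 from by omega] using this
      have H1 : (μ - k) * (μ - (k + 1) - 1) * (x * z) ≤ (μ - k) * (μ - (k + 1) - 1) * (y ^ 2) := by
        rcases le_or_gt (k + 2) (Multiset.card t) with hc | hc
        · have hc' : ((k:ℝ) + 2) ≤ μ := by rw [hμ]; exact_mod_cast hc
          have c1 : (0:ℝ) ≤ μ - k := by linarith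
          have c2 : (0:ℝ) ≤ μ - (k + 1) - 1 := by linarith
          exact mul_le_mul_of_nonneg_left N2 (mul_nonneg c1 c2)
        · have hy0 : y = 0 := p_eq_zero_of_card_lt (by omega)
          have hz0 : z = 0 := p_eq_zero_of_card_lt (by omega)
          rw [hy0, hz0]
          simp
      have H2 : a * ((k:ℝ) + 1) * (μ - (k + 1) - 1) * (v * z) ≤
          a * ((k:ℝ) + 1) * (μ - (k + 1) - 1) * (x * y) := by
        rcases le_or_gt (k + 2) (Multiset.card t) with hc | hc
        · have hc' : ((k:ℝ) + 2) ≤ μ := by rw [hμ]; exact_mod_cast hc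
          have c2 : (0:ℝ) ≤ μ - (k + 1) - 1 := by linarith
          exact mul_le_mul_of_nonneg_left CH (by positivity)
        · have hy0 : y = 0 := p_eq_zero_of_card_lt (by omega)
          have hz0 : z = 0 := p_eq_zero_of_card_lt (by omega)
          rw [hy0, hz0]
          simp
      have H3 : a ^ 2 * (((k:ℝ) + 1) * ((k:ℝ) + 3)) * (v * y) ≤
          a ^ 2 * (((k:ℝ) + 1) * ((k:ℝ) + 3)) * (x ^ 2) :=
        mul_le_mul_of_nonneg_left N1 (by positivity)
      rw [div_mul_div_comm, div_pow, show (μ + 1) * (μ + 1) = (μ + 1) ^ 2 from by ring]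
      rw [div_le_div_iff₀ (by positivity) (by positivity)]
      nlinarith [sq_nonneg (y - a * x), sq_nonneg (μ + 1),
        mul_le_mul_of_nonneg_left H1 (le_of_lt (by positivity : (0:ℝ) < (μ + 1) ^ 2)),
        mul_le_mul_of_nonneg_left H2 (le_of_lt (by positivity : (0:ℝ) < (μ + 1) ^ 2)),
        mul_le_mul_of_nonneg_left H3 (le_of_lt (by positivity : (0:ℝ) < (μ + 1) ^ 2)),
        mul_nonneg (sq_nonneg (y - a * x)) (sq_nonneg (μ + 1))]


lemma p_le_pow (s : Multiset ℝ) (hs : ∀ x ∈ s, 0 ≤ x) :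
    ∀ j, 1 ≤ j → p s j ≤ (p s 1) ^ j := by
  intro j
  induction j with
  | zero => intro h; exact absurd h (by norm_num)
  | succ j ih =>
    intro _
    rcases Nat.eq_zero_or_pos j with rfl | hj
    · simp
    · have hch := chain s hs (newton s hs)
      have h1 := hch (j - 1) 0
      rw [p_zero, one_mul, show 0 + (j - 1) + 2 = j + 1 from by omega,
        show 0 + (j - 1) + 1 = j from by omega] at h1
      calc p s (j + 1) ≤ p s 1 * p s j := h1
        _ ≤ p s 1 * (p s 1) ^ j := mul_le_mul_of_nonneg_left (ih hj) (p_nonneg hs 1)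
        _ = (p s 1) ^ (j + 1) := by ring

lemma maclaurin (s : Multiset ℝ) (hs : ∀ x ∈ s, 0 ≤ x) (j : ℕ) (hj : 1 ≤ j) :
    s.esymm j ≤ ((Multiset.card s).choose j : ℝ) * (s.sum / (Multiset.card s : ℝ)) ^ j := by
  have hsum : s.esymm 1 = s.sum := by
    rw [Multiset.esymm, Multiset.powersetCard_one, Multiset.map_map]
    simp
  have hsumnn : 0 ≤ s.sum := Multiset.sum_nonneg hs
  rcases lt_or_ge (Multiset.card s) j with h | h
  · rw [esymm_eq_zero_of_card_lt h]
    positivity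
  · have hC : (0:ℝ) < ((Multiset.card s).choose j : ℝ) := by
      exact_mod_cast Nat.choose_pos h
    have := p_le_pow s hs j hj
    rw [p, p, Nat.choose_one_right, hsum] at this
    rw [← div_le_iff₀' hC]
    exact this


variable {κ : Type*} [Fintype κ] [DecidableEq κ] [LinearOrder κ]

noncomputable def enum {j : ℕ} (S : Finset κ) (h : S.card = j) : Fin j → κ :=
  fun p => (S.orderIsoOfFin h p : κ)

lemma enum_injective {j : ℕ} (S : Finset κ) (h : S.card = j) : Function.Injective (enum S h) :=
  fun a b hab => (S.orderIsoOfFin h).injective (Subtype.ext hab)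

lemma enum_mem {j : ℕ} (S : Finset κ) (h : S.card = j) (p : Fin j) : enum S h p ∈ S :=
  (S.orderIsoOfFin h p).2

lemma enum_image {j : ℕ} (S : Finset κ) (h : S.card = j) :
    Finset.image (enum S h) Finset.univ = S := by
  apply Finset.eq_of_subset_of_card_le
  · intro x hx
    rw [Finset.mem_image] at hx
    obtain ⟨p, _, rfl⟩ := hx
    exact enum_mem S h p
  · rw [Finset.card_image_of_injective _ (enum_injective S h), Finset.card_univ,
      Fintype.card_fin, h]

lemma det_expand {κ : Type*} [Fintype κ] [DecidableEq κ] {j : ℕ} (A : Matrix (Fin j) κ ℝ) (C : Matrix κ (Fin j) ℝ) :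
    (A * C).det = ∑ r : Fin j → κ, (∏ p, A p (r p)) * (C.submatrix r id).det := by
  have h1 : (A * C).det = Matrix.detRowAlternating (fun p : Fin j => ∑ k : κ, A p k • C k) := by
    congr 1
    ext p q
    simp [Matrix.mul_apply, Finset.sum_apply]
  rw [h1]
  rw [show (Matrix.detRowAlternating (fun p : Fin j => ∑ k : κ, A p k • C k) : ℝ)
    = Matrix.detRowAlternating.toMultilinearMap (fun p : Fin j => ∑ k : κ, A p k • C k) from rfl]
  rw [MultilinearMap.map_sum]
  congr 1
  ext r
  rw [MultilinearMap.map_smul_univ]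
  simp only [smul_eq_mul]
  rfl


lemma cb_core {j : ℕ} (A : Matrix (Fin j) κ ℝ) (C : Matrix κ (Fin j) ℝ) :
    (A * C).det = ∑ S ∈ (Finset.powersetCard j (Finset.univ : Finset κ)).attach,
      (A.submatrix id (enum S.1 (Finset.mem_powersetCard_univ.mp S.2))).det *
      (C.submatrix (enum S.1 (Finset.mem_powersetCard_univ.mp S.2)) id).det := by
  rw [det_expand]
  rw [← Finset.sum_filter_add_sum_filter_not Finset.univ Function.Injective]
  have hzero : ∑ r ∈ Finset.univ.filter (fun r => ¬ Function.Injective r),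
      (∏ p, A p (r p)) * (C.submatrix r id).det = 0 := by
    refine Finset.sum_eq_zero fun r hr => ?_
    rw [Finset.mem_filter] at hr
    rw [Function.not_injective_iff] at hr
    obtain ⟨p1, p2, heq, hne⟩ := hr.2
    rw [Matrix.det_zero_of_row_eq hne (by ext q; simp [Matrix.submatrix_apply, heq]), mul_zero]
  rw [hzero, add_zero]
  -- now group the injective functions
  have hgroup : ∑ r ∈ Finset.univ.filter (fun r : Fin j → κ => Function.Injective r),
      (∏ p, A p (r p)) * (C.submatrix r id).det
      = ∑ x ∈ ((Finset.powersetCard j (Finset.univ : Finset κ)).attach ×ˢ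
          (Finset.univ : Finset (Equiv.Perm (Fin j)))),
        (∏ p, A p (enum x.1.1 (Finset.mem_powersetCard_univ.mp x.1.2) (x.2 p))) *
        (C.submatrix (enum x.1.1 (Finset.mem_powersetCard_univ.mp x.1.2) ∘ x.2) id).det := by
    refine (Finset.sum_bij (fun x _ => enum x.1.1 (Finset.mem_powersetCard_univ.mp x.1.2) ∘ x.2)
      ?_ ?_ ?_ ?_).symm
    · intro x _
      rw [Finset.mem_filter]
      exact ⟨Finset.mem_univ _,
        (enum_injective _ _).comp x.2.injective⟩
    · -- injectivity of the map
      rintro ⟨⟨S1, hS1⟩, σ1⟩ _ ⟨⟨S2, hS2⟩, σ2⟩ _ heq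
      have heq' : enum S1 (Finset.mem_powersetCard_univ.mp hS1) ∘ σ1
          = enum S2 (Finset.mem_powersetCard_univ.mp hS2) ∘ σ2 := heq
      have himg : ∀ (S : Finset κ) (hS : S.card = j) (σ : Equiv.Perm (Fin j)),
          Finset.image (enum S hS ∘ σ) Finset.univ = S := by
        intro S hS σ
        rw [← Finset.image_image, Finset.image_univ_equiv, enum_image]
      have hSS : S1 = S2 := by
        rw [← himg S1 (Finset.mem_powersetCard_univ.mp hS1) σ1,
          ← himg S2 (Finset.mem_powersetCard_univ.mp hS2) σ2, heq']
      subst hSS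
      have hσ : σ1 = σ2 :=
        Equiv.ext fun p => enum_injective S1 (Finset.mem_powersetCard_univ.mp hS1)
          (congrFun heq' p)
      subst hσ
      rfl
    · -- surjectivity
      intro r hr
      rw [Finset.mem_filter] at hr
      have hcard : (Finset.image r Finset.univ).card = j := by
        rw [Finset.card_image_of_injective _ hr.2, Finset.card_univ, Fintype.card_fin]
      have hmem : Finset.image r Finset.univ ∈ Finset.powersetCard j (Finset.univ : Finset κ) :=
        Finset.mem_powersetCard_univ.mpr hcard
      set S : Finset κ := Finset.image r Finset.univ with hS
      have hbij : Function.Bijective (fun p => (S.orderIsoOfFin hcard).symm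
          ⟨r p, Finset.mem_image_of_mem r (Finset.mem_univ p)⟩) := by
        rw [Fintype.bijective_iff_injective_and_card]
        refine ⟨fun a b hab => hr.2 ?_, rfl⟩
        have := congrArg (fun z => ((S.orderIsoOfFin hcard) z : κ)) hab
        simpa using this
      refine ⟨(⟨S, hmem⟩, Equiv.ofBijective _ hbij), Finset.mem_product.mpr
        ⟨Finset.mem_attach _ _, Finset.mem_univ _⟩, ?_⟩
      funext p
      simp [enum, Equiv.ofBijective]
    · intro x hx
      rfl
  rw [hgroup, Finset.sum_product]
  refine Finset.sum_congr rfl fun S _ => ?_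
  set e := enum S.1 (Finset.mem_powersetCard_univ.mp S.2) with he
  -- per S : sum over permutations
  have hperm : ∀ σ : Equiv.Perm (Fin j),
      (C.submatrix (e ∘ σ) id).det = (Equiv.Perm.sign σ : ℝ) * (C.submatrix e id).det := by
    intro σ
    have : C.submatrix (e ∘ σ) id = (C.submatrix e id).submatrix σ id := by
      rw [Matrix.submatrix_submatrix]
      rfl
    rw [this, Matrix.det_permute]
  have hdetA : (A.submatrix id e).det
      = ∑ σ : Equiv.Perm (Fin j), (Equiv.Perm.sign σ : ℝ) * ∏ p, A p (e (σ p)) := by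
    rw [← Matrix.det_transpose, Matrix.det_apply']
    rfl
  calc ∑ σ : Equiv.Perm (Fin j), (∏ p, A p (e (σ p))) * (C.submatrix (e ∘ σ) id).det
      = ∑ σ : Equiv.Perm (Fin j), ((Equiv.Perm.sign σ : ℝ) * ∏ p, A p (e (σ p)))
        * (C.submatrix e id).det := by
        refine Finset.sum_congr rfl fun σ _ => ?_
        rw [hperm σ]
        ring
    _ = (A.submatrix id e).det * (C.submatrix e id).det := by
        rw [hdetA, Finset.sum_mul]


variable {ι κ : Type*} [Fintype ι] [DecidableEq ι] [LinearOrder ι]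
  [Fintype κ] [DecidableEq κ] [LinearOrder κ]

lemma cb_sym {j : ℕ} (B : Matrix ι κ ℝ) :
    ∑ S ∈ (Finset.powersetCard j (Finset.univ : Finset κ)).attach,
      ((Bᵀ * B).submatrix (enum S.1 (Finset.mem_powersetCard_univ.mp S.2))
        (enum S.1 (Finset.mem_powersetCard_univ.mp S.2))).det
    = ∑ T ∈ (Finset.powersetCard j (Finset.univ : Finset ι)).attach,
      ((B * Bᵀ).submatrix (enum T.1 (Finset.mem_powersetCard_univ.mp T.2))
        (enum T.1 (Finset.mem_powersetCard_univ.mp T.2))).det := by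
  have hS : ∀ S : {x // x ∈ Finset.powersetCard j (Finset.univ : Finset κ)},
      ((Bᵀ * B).submatrix (enum S.1 (Finset.mem_powersetCard_univ.mp S.2))
        (enum S.1 (Finset.mem_powersetCard_univ.mp S.2))).det
      = ∑ T ∈ (Finset.powersetCard j (Finset.univ : Finset ι)).attach,
        ((B.submatrix (enum T.1 (Finset.mem_powersetCard_univ.mp T.2))
          (enum S.1 (Finset.mem_powersetCard_univ.mp S.2))).det) ^ 2 := by
    intro S
    set e := enum S.1 (Finset.mem_powersetCard_univ.mp S.2)
    have h1 : (Bᵀ * B).submatrix e e = (Bᵀ.submatrix e id) * (B.submatrix id e) := by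
      ext a b
      simp [Matrix.mul_apply]
    rw [h1, cb_core]
    refine Finset.sum_congr rfl fun T _ => ?_
    set f := enum T.1 (Finset.mem_powersetCard_univ.mp T.2)
    have h2 : (Bᵀ.submatrix e id).submatrix id f = (B.submatrix f e)ᵀ := by
      ext a b
      rfl
    have h3 : (B.submatrix id e).submatrix f id = B.submatrix f e := by
      ext a b
      rfl
    rw [h2, h3, Matrix.det_transpose, sq]
  have hT : ∀ T : {x // x ∈ Finset.powersetCard j (Finset.univ : Finset ι)},
      ((B * Bᵀ).submatrix (enum T.1 (Finset.mem_powersetCard_univ.mp T.2))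
        (enum T.1 (Finset.mem_powersetCard_univ.mp T.2))).det
      = ∑ S ∈ (Finset.powersetCard j (Finset.univ : Finset κ)).attach,
        ((B.submatrix (enum T.1 (Finset.mem_powersetCard_univ.mp T.2))
          (enum S.1 (Finset.mem_powersetCard_univ.mp S.2))).det) ^ 2 := by
    intro T
    set f := enum T.1 (Finset.mem_powersetCard_univ.mp T.2)
    have h1 : (B * Bᵀ).submatrix f f = (B.submatrix f id) * (Bᵀ.submatrix id f) := by
      ext a b
      simp [Matrix.mul_apply]
    rw [h1, cb_core]
    refine Finset.sum_congr rfl fun S _ => ?_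
    set e := enum S.1 (Finset.mem_powersetCard_univ.mp S.2)
    have h2 : (B.submatrix f id).submatrix id e = B.submatrix f e := by
      ext a b
      rfl
    have h3 : (Bᵀ.submatrix id f).submatrix e id = (B.submatrix f e)ᵀ := by
      ext a b
      rfl
    rw [h2, h3, Matrix.det_transpose, sq]
  rw [Finset.sum_congr rfl fun S _ => hS S, Finset.sum_congr rfl fun T _ => hT T,
    Finset.sum_comm]


end DRaux

open DRaux
set_option maxHeartbeats 1600000
/-- Dvoretzky–Rogers-type volume bound: if `I_n = Σ λ_i u_i u_iᵀ` with unit vectors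
`u_i` and nonnegative scalars `λ_i`, `n ≤ m ≤ n(n+1)/2`, then for every `1 ≤ j ≤ n`
there is a `j`-element index set `J` with
`vol_j(conv{0, u_j : j ∈ J})² = det((U_J)ᵀ U_J)/(j!)² ≥ C(n,j)·(m/n)^j/(C(m,j)·(j!)²)`. -/
theorem dvoretzky_rogers_type_volume_bound {n m : ℕ} (hnm : n ≤ m)
    (hm : m ≤ n * (n + 1) / 2) (u : Fin m → Fin n → ℝ) (lam : Fin m → ℝ)
    (hu : ∀ i, ∑ a, (u i a) ^ 2 = 1) (hlam : ∀ i, 0 ≤ lam i)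
    (hdecomp : ∑ i, lam i • Matrix.vecMulVec (u i) (u i) = (1 : Matrix (Fin n) (Fin n) ℝ))
    (j : ℕ) (hj1 : 1 ≤ j) (hj2 : j ≤ n) :
    ∃ J ∈ Finset.powersetCard j (Finset.univ : Finset (Fin m)),
      (Nat.choose n j : ℝ) * ((m : ℝ) / n) ^ j / (Nat.choose m j) ≤
        Matrix.det (Matrix.of fun (a b : J) => ∑ c, u a.1 c * u b.1 c) ∧
      (Nat.choose n j : ℝ) * ((m : ℝ) / n) ^ j /
          ((Nat.choose m j : ℝ) * (j.factorial : ℝ) ^ 2) ≤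
        (Real.sqrt (Matrix.det (Matrix.of fun (a b : J) => ∑ c, u a.1 c * u b.1 c)) /
            (j.factorial : ℝ)) ^ 2 := by
  have hn : 0 < n := lt_of_lt_of_le hj1 hj2
  have hm0 : 0 < m := lt_of_lt_of_le hn hnm
  have hjm : j ≤ m := le_trans hj2 hnm
  set B : Matrix (Fin n) (Fin m) ℝ := Matrix.of fun a i => Real.sqrt (lam i) * u i a with hB
  set G : Finset (Fin m) → ℝ :=
    fun S => Matrix.det (Matrix.of fun (a b : S) => ∑ c, u a.1 c * u b.1 c) with hG
  -- B * Bᵀ = 1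
  have hBBt : B * Bᵀ = 1 := by
    ext a b
    have h1 := congrFun (congrFun hdecomp a) b
    simp only [Finset.sum_apply, Matrix.sum_apply, Matrix.smul_apply, Matrix.vecMulVec_apply,
      smul_eq_mul] at h1
    rw [Matrix.mul_apply, ← h1]
    refine Finset.sum_congr rfl fun i _ => ?_
    simp only [hB, Matrix.transpose_apply, Matrix.of_apply]
    linear_combination (u i a * u i b) * Real.mul_self_sqrt (hlam i)
  -- the weighted sum identity
  have hidentity : ∑ S ∈ Finset.powersetCard j (Finset.univ : Finset (Fin m)),
      (∏ i ∈ S, lam i) * G S = (Nat.choose n j : ℝ) := by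
    rw [← Finset.sum_attach (Finset.powersetCard j (Finset.univ : Finset (Fin m)))
      (fun S => (∏ i ∈ S, lam i) * G S)]
    have hLHS : ∀ S : {x // x ∈ Finset.powersetCard j (Finset.univ : Finset (Fin m))},
        ((Bᵀ * B).submatrix (enum S.1 (Finset.mem_powersetCard_univ.mp S.2))
          (enum S.1 (Finset.mem_powersetCard_univ.mp S.2))).det
        = (∏ i ∈ S.1, lam i) * G S.1 := by
      intro S
      set hSc := Finset.mem_powersetCard_univ.mp S.2
      set e := enum S.1 hSc with he
      set M : Matrix (Fin j) (Fin j) ℝ :=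
        Matrix.of fun p q : Fin j => ∑ c, u (e p) c * u (e q) c with hM
      set N : Matrix (Fin j) (Fin j) ℝ :=
        Matrix.of fun p q : Fin j => Real.sqrt (lam (e q)) * M p q with hN
      have h1 : (Bᵀ * B).submatrix e e = Matrix.of (fun p q : Fin j =>
          Real.sqrt (lam (e p)) * N p q) := by
        ext p q
        simp only [Matrix.submatrix_apply, Matrix.mul_apply, Matrix.transpose_apply,
          Matrix.of_apply, hB, hN, hM]
        simp only [Finset.mul_sum]
        refine Finset.sum_congr rfl fun c _ => ?_
        ring
      rw [h1, Matrix.det_mul_column, hN, Matrix.det_mul_row]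
      have h2 : M.det = G S.1 := by
        show M.det = (Matrix.of fun (a b : {x // x ∈ S.1}) => ∑ c, u a.1 c * u b.1 c).det
        rw [← Matrix.det_submatrix_equiv_self ((S.1.orderIsoOfFin hSc).toEquiv)
          (Matrix.of fun (a b : {x // x ∈ S.1}) => ∑ c, u a.1 c * u b.1 c)]
        rfl
      rw [h2]
      have h3 : (∏ p, Real.sqrt (lam (e p))) * ((∏ p, Real.sqrt (lam (e p)))) =
          ∏ i ∈ S.1, lam i := by
        rw [← Finset.prod_mul_distrib]
        have h4 : ∀ p, Real.sqrt (lam (e p)) * Real.sqrt (lam (e p)) = lam (e p) :=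
          fun p => Real.mul_self_sqrt (hlam (e p))
        rw [Finset.prod_congr rfl fun p _ => h4 p]
        rw [← enum_image S.1 hSc, Finset.prod_image
          (fun a _ b _ hab => enum_injective S.1 hSc hab)]
      linear_combination (G S.1) * h3
    rw [Finset.sum_congr rfl fun S _ => (hLHS S).symm, cb_sym B]
    have hRHS : ∀ T : {x // x ∈ Finset.powersetCard j (Finset.univ : Finset (Fin n))},
        ((B * Bᵀ).submatrix (enum T.1 (Finset.mem_powersetCard_univ.mp T.2))
          (enum T.1 (Finset.mem_powersetCard_univ.mp T.2))).det = 1 := by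
      intro T
      rw [hBBt]
      have : (1 : Matrix (Fin n) (Fin n) ℝ).submatrix
          (enum T.1 (Finset.mem_powersetCard_univ.mp T.2))
          (enum T.1 (Finset.mem_powersetCard_univ.mp T.2)) = (1 : Matrix (Fin j) (Fin j) ℝ) := by
        ext a b
        rw [Matrix.submatrix_apply, Matrix.one_apply, Matrix.one_apply]
        by_cases hab : a = b
        · simp [hab]
        · rw [if_neg hab, if_neg (fun hc => hab (enum_injective T.1 _ hc))]
      rw [this, Matrix.det_one]
    rw [Finset.sum_congr rfl fun T _ => hRHS T]
    rw [Finset.sum_const, Finset.card_attach, Finset.card_powersetCard, Finset.card_univ,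
      Fintype.card_fin, nsmul_eq_mul, mul_one]
  -- trace : sum of lambdas is n
  have htrace : ∑ i, lam i = (n : ℝ) := by
    have h1 := congrArg Matrix.trace hdecomp
    rw [Matrix.trace_sum, Matrix.trace_one, Fintype.card_fin] at h1
    rw [← h1]
    refine Finset.sum_congr rfl fun i _ => ?_
    rw [Matrix.trace_smul, smul_eq_mul]
    have h2 : (Matrix.vecMulVec (u i) (u i)).trace = 1 := by
      rw [Matrix.trace, ← hu i]
      refine Finset.sum_congr rfl fun a _ => ?_
      simp [Matrix.diag, Matrix.vecMulVec_apply, sq]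
    rw [h2, mul_one]
  -- Maclaurin bound on the weights
  have hmac : ∑ S ∈ Finset.powersetCard j (Finset.univ : Finset (Fin m)), ∏ i ∈ S, lam i
      ≤ (Nat.choose m j : ℝ) * ((n : ℝ) / m) ^ j := by
    have hesymm := Finset.esymm_map_val lam (Finset.univ : Finset (Fin m)) j
    have hcard : Multiset.card ((Finset.univ : Finset (Fin m)).val.map lam) = m := by
      simp
    have hsum : ((Finset.univ : Finset (Fin m)).val.map lam).sum = ∑ i, lam i := rfl
    have hmem : ∀ x ∈ (Finset.univ : Finset (Fin m)).val.map lam, 0 ≤ x := by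
      intro x hx
      rw [Multiset.mem_map] at hx
      obtain ⟨i, _, rfl⟩ := hx
      exact hlam i
    have := maclaurin _ hmem j hj1
    rw [hcard, hsum, htrace, hesymm] at this
    exact this
  -- choose the maximizing subset
  have hne : (Finset.powersetCard j (Finset.univ : Finset (Fin m))).Nonempty := by
    rw [← Finset.card_pos, Finset.card_powersetCard, Finset.card_univ, Fintype.card_fin]
    exact Nat.choose_pos hjm
  obtain ⟨S₀, hS₀mem, hS₀max⟩ := Finset.exists_max_image _ G hne
  have hCnj : (0:ℝ) < (Nat.choose n j : ℝ) := by exact_mod_cast Nat.choose_pos hj2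
  have hGpos : 0 ≤ G S₀ := by
    by_contra hc
    push_neg at hc
    have hsum_le : ∑ S ∈ Finset.powersetCard j (Finset.univ : Finset (Fin m)),
        (∏ i ∈ S, lam i) * G S ≤ 0 := by
      refine Finset.sum_nonpos fun S hS => ?_
      exact mul_nonpos_of_nonneg_of_nonpos (Finset.prod_nonneg fun i _ => hlam i)
        (le_of_lt (lt_of_le_of_lt (hS₀max S hS) hc))
    rw [hidentity] at hsum_le
    linarith
  have hkey : (Nat.choose n j : ℝ) ≤ ((Nat.choose m j : ℝ) * ((n : ℝ) / m) ^ j) * G S₀ := by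
    calc (Nat.choose n j : ℝ)
        = ∑ S ∈ Finset.powersetCard j (Finset.univ : Finset (Fin m)),
          (∏ i ∈ S, lam i) * G S := hidentity.symm
      _ ≤ ∑ S ∈ Finset.powersetCard j (Finset.univ : Finset (Fin m)),
          (∏ i ∈ S, lam i) * G S₀ := by
          refine Finset.sum_le_sum fun S hS => ?_
          exact mul_le_mul_of_nonneg_left (hS₀max S hS)
            (Finset.prod_nonneg fun i _ => hlam i)
      _ = (∑ S ∈ Finset.powersetCard j (Finset.univ : Finset (Fin m)),
          ∏ i ∈ S, lam i) * G S₀ := by rw [Finset.sum_mul]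
      _ ≤ ((Nat.choose m j : ℝ) * ((n : ℝ) / m) ^ j) * G S₀ :=
          mul_le_mul_of_nonneg_right hmac hGpos
  have hCm : (0:ℝ) < (Nat.choose m j : ℝ) := by exact_mod_cast Nat.choose_pos hjm
  have hnR : (0:ℝ) < (n:ℝ) := by exact_mod_cast hn
  have hmR : (0:ℝ) < (m:ℝ) := by exact_mod_cast hm0
  have hfirst : (Nat.choose n j : ℝ) * ((m : ℝ) / n) ^ j / (Nat.choose m j) ≤ G S₀ := by
    rw [div_le_iff₀ hCm]
    have hpow : ((n:ℝ)/m)^j * ((m:ℝ)/n)^j = 1 := by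
      rw [← mul_pow, show (n:ℝ)/m * ((m:ℝ)/n) = 1 from by field_simp]
      exact one_pow j
    calc (Nat.choose n j : ℝ) * ((m:ℝ)/n)^j
        ≤ (((Nat.choose m j : ℝ) * ((n:ℝ)/m)^j) * G S₀) * ((m:ℝ)/n)^j :=
          mul_le_mul_of_nonneg_right hkey (by positivity)
      _ = (Nat.choose m j : ℝ) * G S₀ * (((n:ℝ)/m)^j * ((m:ℝ)/n)^j) := by ring
      _ = G S₀ * (Nat.choose m j : ℝ) := by rw [hpow]; ring
  refine ⟨S₀, hS₀mem, hfirst, ?_⟩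
  have hfac : (0:ℝ) < (j.factorial : ℝ) := by exact_mod_cast j.factorial_pos
  show (Nat.choose n j:ℝ) * ((m:ℝ)/n)^j / ((Nat.choose m j:ℝ)*(j.factorial:ℝ)^2)
    ≤ (Real.sqrt (G S₀) / (j.factorial:ℝ))^2
  have hR : (Real.sqrt (G S₀) / (j.factorial:ℝ))^2 = G S₀ / (j.factorial:ℝ)^2 := by
    rw [div_pow, Real.sq_sqrt hGpos]
  rw [hR]
  rw [show (Nat.choose n j : ℝ) * ((m:ℝ)/n)^j / ((Nat.choose m j:ℝ) * (j.factorial:ℝ)^2)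
    = ((Nat.choose n j : ℝ) * ((m:ℝ)/n)^j / (Nat.choose m j)) / (j.factorial:ℝ)^2 from by
      rw [div_div]]
  exact (div_le_div_iff_of_pos_right (by positivity)).mpr hfirst
end
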